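/- Let α_0 > 0, β_0 > 0, and c > 0. Then the inequality β_0² ω² + α_0² c² < (α_0 c − ω²)² + (α_0 + β_0)² ω² holds for every ω > 0 if and only if α_0 + 2β_0 ≥ 2c. -/
import Mathlib


/-- String-stability criterion: |G(jω)| < 1 for all ω > 0, written as the real
inequality β₀²ω² + α₀²c² < (α₀c − ω²)² + (α₀ + β₀)²ω², holds for every ω > 0 iff
α₀ + 2β₀ ≥ 2c. -/
theorem stmt_8 (α₀ β₀ c : ℝ) (hα : 0 < α₀) (hβ : 0 < β₀) (hc : 0 < c) :
    (∀ ω : ℝ, 0 < ω →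
      β₀ ^ 2 * ω ^ 2 + α₀ ^ 2 * c ^ 2
        < (α₀ * c - ω ^ 2) ^ 2 + (α₀ + β₀) ^ 2 * ω ^ 2)
    ↔ α₀ + 2 * β₀ ≥ 2 * c := by
  constructor
  · intro h
    by_contra hlt
    push_neg at hlt
    set K : ℝ := α₀ * (2 * c - α₀ - 2 * β₀) with hK
    have hKpos : 0 < K := by
      apply mul_pos hα; linarith
    set ω : ℝ := Real.sqrt K / 2 with hω
    have hωpos : 0 < ω := by positivity
    have hsq : ω ^ 2 = K / 4 := by
      rw [hω, div_pow, Real.sq_sqrt hKpos.le]; norm_num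
    have := h ω hωpos
    have hK4 : K / 4 ≤ K := by linarith
    nlinarith [sq_nonneg ω, hsq]
  · intro hge ω hω
    have h1 : 0 ≤ α₀ * (α₀ + 2 * β₀ - 2 * c) := by
      apply mul_nonneg hα.le; linarith
    nlinarith [pow_pos hω 2, sq_nonneg ω]
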